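/- arXiv:2407.19750 — 3 statements merged into one kernel-verified Lean document; each statement's English description precedes it below -/
import Mathlib

section
/- Let g and h be finite-dimensional real Lie algebras and let I ⊆ ℝ be an open interval containing 0 and 1. Let c : I → h and ψ : I → Hom_ℝ(g,h) be smooth curves. Then the following are equivalent. (i) For all smooth functions f, k : I → ℝ and all smooth curves x, y : I → g the identity (f·k′ − k·f′)·c(t) + ψ_t([x(t),y(t)]_g + f(t)·y′(t) − k(t)·x′(t)) = f(t)·(d/dt)(k(t)·c(t) + ψ_t(y(t))) − k(t)·(d/dt)(f(t)·c(t) + ψ_t(x(t))) + [f(t)·c(t) + ψ_t(x(t)), k(t)·c(t) + ψ_t(y(t))]_h holds for every t ∈ I (primes denoting derivatives in t). (ii) For every t ∈ I the linear map ψ_t : g → h preserves Lie brackets, and the differential equation (∂_t ψ)_t(x) = −[c(t), ψ_t(x)]_h holds for every t ∈ I and x ∈ g. (Condition (i) is exactly the bracket-compatibility condition saying that the vector bundle map Φ : TI × g → h, Φ(r·∂_t|_s, x) := r·c(s) + ψ_s(x), is a morphism of Lie algebroids, i.e., an LA-homotopy between the Lie algebra morphisms ψ_0 and ψ_1.) 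-/
/-- **LA-homotopies between Lie algebra morphisms.**
Let `g` and `h` be finite-dimensional real Lie algebras (encoded as finite-dimensional
normed real vector spaces together with bilinear brackets `Bg`, `Bh` satisfying
alternativity and the (Leibniz form of the) Jacobi identity), and let `I ⊆ ℝ` be an
open interval containing `0` and `1`.  Let `c : I → h` and `ψ : I → Hom_ℝ(g,h)` be
smooth curves.  Then the bracket-compatibility condition (i) saying that the vector
bundle map `Φ : TI × g → h`, `Φ(r·∂ₜ|ₛ, x) = r·c(s) + ψ_s(x)` is a morphism of Lie
algebroids holds if and only if (ii) each `ψ_t` preserves brackets and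
`(∂ₜψ)_t(x) = −[c(t), ψ_t(x)]_h` for all `t ∈ I`, `x ∈ g`. -/
theorem la_homotopy_lie_algebras_iff
    {g : Type*} [NormedAddCommGroup g] [NormedSpace ℝ g] [FiniteDimensional ℝ g]
    {h : Type*} [NormedAddCommGroup h] [NormedSpace ℝ h] [FiniteDimensional ℝ h]
    (Bg : g →L[ℝ] g →L[ℝ] g) (Bh : h →L[ℝ] h →L[ℝ] h)
    (hBg_alt : ∀ x : g, Bg x x = 0)
    (hBg_jac : ∀ x y z : g, Bg x (Bg y z) = Bg (Bg x y) z + Bg y (Bg x z))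
    (hBh_alt : ∀ u : h, Bh u u = 0)
    (hBh_jac : ∀ u v w : h, Bh u (Bh v w) = Bh (Bh u v) w + Bh v (Bh u w))
    (I : Set ℝ) (hIopen : IsOpen I) (hIconn : I.OrdConnected)
    (h0 : (0 : ℝ) ∈ I) (h1 : (1 : ℝ) ∈ I)
    (c : ℝ → h) (ψ : ℝ → (g →L[ℝ] h))
    (hc : ContDiffOn ℝ (⊤ : ℕ∞) c I) (hψ : ContDiffOn ℝ (⊤ : ℕ∞) ψ I) :
    (∀ (f k : ℝ → ℝ) (x y : ℝ → g),
        ContDiffOn ℝ (⊤ : ℕ∞) f I → ContDiffOn ℝ (⊤ : ℕ∞) k I →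
        ContDiffOn ℝ (⊤ : ℕ∞) x I → ContDiffOn ℝ (⊤ : ℕ∞) y I →
        ∀ t ∈ I,
          (f t * deriv k t - k t * deriv f t) • c t
              + ψ t (Bg (x t) (y t) + f t • deriv y t - k t • deriv x t)
            = f t • deriv (fun s => k s • c s + ψ s (y s)) t
              - k t • deriv (fun s => f s • c s + ψ s (x s)) t
              + Bh (f t • c t + ψ t (x t)) (k t • c t + ψ t (y t)))
      ↔
    ((∀ t ∈ I, ∀ x y : g, ψ t (Bg x y) = Bh (ψ t x) (ψ t y)) ∧
      (∀ t ∈ I, ∀ x : g, deriv (fun s => ψ s x) t = - Bh (c t) (ψ t x))) := by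

  have hBh_anti : ∀ u v : h, Bh u v = - Bh v u := by
    intro u v
    have := hBh_alt (u + v)
    simp [map_add, ContinuousLinearMap.add_apply, hBh_alt] at this
    linear_combination (norm := abel) this
  constructor
  · intro H
    constructor
    · intro t ht x y
      have := H (fun _ => 0) (fun _ => 0) (fun _ => x) (fun _ => y)
        contDiffOn_const contDiffOn_const contDiffOn_const contDiffOn_const t ht
      simpa using this
    · intro t ht x
      have := H (fun _ => 0) (fun _ => 1) (fun _ => x) (fun _ => 0)
        contDiffOn_const contDiffOn_const contDiffOn_const contDiffOn_const t ht
      simp only [deriv_const', mul_zero, zero_mul, sub_zero, zero_sub, zero_smul,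
        one_smul, smul_zero, map_zero, add_zero, zero_add, sub_self, map_add] at this
      have h3 : deriv (fun s => ψ s x) t = Bh (ψ t x) (c t) :=
        neg_add_eq_zero.mp this.symm
      rw [h3]; exact hBh_anti _ _
  · rintro ⟨Hm, Hd⟩ f k x y hf hk hx hy t ht
    have htn : I ∈ nhds t := hIopen.mem_nhds ht
    have hf' : HasDerivAt f (deriv f t) t :=
      ((hf.contDiffAt htn).differentiableAt (by simp)).hasDerivAt
    have hk' : HasDerivAt k (deriv k t) t :=
      ((hk.contDiffAt htn).differentiableAt (by simp)).hasDerivAt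
    have hx' : HasDerivAt x (deriv x t) t :=
      ((hx.contDiffAt htn).differentiableAt (by simp)).hasDerivAt
    have hy' : HasDerivAt y (deriv y t) t :=
      ((hy.contDiffAt htn).differentiableAt (by simp)).hasDerivAt
    have hc' : HasDerivAt c (deriv c t) t :=
      ((hc.contDiffAt htn).differentiableAt (by simp)).hasDerivAt
    have hψ' : HasDerivAt ψ (deriv ψ t) t :=
      ((hψ.contDiffAt htn).differentiableAt (by simp)).hasDerivAt
    have hψx : ∀ v : g, HasDerivAt (fun s => ψ s v) ((deriv ψ t) v) t := fun v => by
      simpa using hψ'.clm_apply (hasDerivAt_const t v)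
    have hψeq : ∀ v : g, (deriv ψ t) v = - Bh (c t) (ψ t v) := fun v => by
      rw [← (hψx v).deriv]; exact Hd t ht v
    have d1 : deriv (fun s => k s • c s + ψ s (y s)) t
        = (k t • deriv c t + deriv k t • c t) + ((deriv ψ t) (y t) + ψ t (deriv y t)) :=
      ((hk'.smul hc').add (hψ'.clm_apply hy')).deriv
    have d2 : deriv (fun s => f s • c s + ψ s (x s)) t
        = (f t • deriv c t + deriv f t • c t) + ((deriv ψ t) (x t) + ψ t (deriv x t)) :=
      ((hf'.smul hc').add (hψ'.clm_apply hx')).deriv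
    rw [d1, d2, hψeq (y t), hψeq (x t)]
    simp only [map_add, map_sub, map_smul, ContinuousLinearMap.map_smul,
      ContinuousLinearMap.add_apply, ContinuousLinearMap.smul_apply]
    rw [Hm t ht (x t) (y t), hBh_alt (c t), hBh_anti ((ψ t) (x t)) (c t)]
    module
end

section
/- Let g and h be finite-dimensional real Lie algebras, let I ⊆ ℝ be an interval containing 0, let c : I → h be a continuous curve, and let ψ : I → Hom_ℝ(g,h) be a differentiable curve satisfying the linear differential equation (∂_t ψ)_t(x) = −[c(t), ψ_t(x)]_h for all t ∈ I and all x ∈ g. If ψ_0 preserves Lie brackets, i.e. ψ_0([x,y]_g) = [ψ_0(x), ψ_0(y)]_h for all x, y ∈ g, then for every t ∈ I the linear map ψ_t : g → h preserves Lie brackets, i.e. ψ_t is a morphism of Lie algebras. -/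
/-- If `ψ : I → Hom_ℝ(g,h)` is a differentiable curve satisfying the linear ODE
`(∂ₜψ)_t(x) = −[c(t), ψ_t(x)]_h` on an interval `I ∋ 0` for a continuous curve
`c : ℝ → h`, and if `ψ_0` preserves Lie brackets, then `ψ_t` preserves Lie brackets
for every `t ∈ I`, i.e. `ψ_t` is a morphism of Lie algebras. -/
theorem bracket_preserving_along_ode
    {g : Type*} [NormedAddCommGroup g] [NormedSpace ℝ g] [FiniteDimensional ℝ g]
    {h : Type*} [NormedAddCommGroup h] [NormedSpace ℝ h] [FiniteDimensional ℝ h]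
    (Bg : g →L[ℝ] g →L[ℝ] g) (Bh : h →L[ℝ] h →L[ℝ] h)
    (hBg_alt : ∀ x : g, Bg x x = 0)
    (hBg_jac : ∀ x y z : g, Bg x (Bg y z) = Bg (Bg x y) z + Bg y (Bg x z))
    (hBh_alt : ∀ u : h, Bh u u = 0)
    (hBh_jac : ∀ u v w : h, Bh u (Bh v w) = Bh (Bh u v) w + Bh v (Bh u w))
    (I : Set ℝ) (hIconn : I.OrdConnected) (h0 : (0 : ℝ) ∈ I)
    (c : ℝ → h) (hc : ContinuousOn c I)
    (ψ : ℝ → (g →L[ℝ] h))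
    (hode : ∀ t ∈ I, ∀ x : g,
      HasDerivWithinAt (fun s => ψ s x) (- Bh (c t) (ψ t x)) I t)
    (hψ0 : ∀ x y : g, ψ 0 (Bg x y) = Bh (ψ 0 x) (ψ 0 y)) :
    ∀ t ∈ I, ∀ x y : g, ψ t (Bg x y) = Bh (ψ t x) (ψ t y) := by
  intro t ht x y
  -- the defect curve
  set f : ℝ → h := fun s => Bh (ψ s x) (ψ s y) - ψ s (Bg x y) with hf_def
  suffices hft : f t = 0 by
    have := sub_eq_zero.mp hft
    simpa [hf_def] using this.symm
  have hf0 : f 0 = 0 := by simp [hf_def, hψ0 x y]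
  -- derivative of the defect curve
  have hf' : ∀ s ∈ I, HasDerivWithinAt f (-(Bh (c s) (f s))) I s := by
    intro s hs
    have hx := hode s hs x
    have hy := hode s hs y
    have hxy := hode s hs (Bg x y)
    have h1 : HasDerivWithinAt (fun r => Bh (ψ r x))
        (Bh (-(Bh (c s) (ψ s x)))) I s :=
      Bh.hasFDerivAt.comp_hasDerivWithinAt s hx
    have h2 := (h1.clm_apply hy).sub hxy
    convert h2 using 1
    · rfl
    simp only [hf_def, map_sub, map_neg, ContinuousLinearMap.neg_apply,
      ContinuousLinearMap.sub_apply, hBh_jac (c s) (ψ s x) (ψ s y)]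
    abel
  have hIcc : ∀ a b : ℝ, a ∈ I → b ∈ I → Set.Icc a b ⊆ I := fun a b ha hb =>
    hIconn.out ha hb
  -- uniform Lipschitz bound on a compact subinterval
  have key : ∀ a b : ℝ, a ∈ I → b ∈ I → a ≤ b →
      ((f a = 0 → f b = 0) ∧ (f b = 0 → f a = 0)) := by
    intro a b ha hb hab
    have hsub : Set.Icc a b ⊆ I := hIcc a b ha hb
    obtain ⟨C, hC⟩ := (isCompact_Icc (a := a) (b := b)).exists_bound_of_continuousOn
      (hc.mono hsub)
    set K : NNReal := ‖Bh‖₊ * (max C 0).toNNReal with hK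
    have hlip : ∀ s : ℝ,
        LipschitzOnWith K (fun u : h => -(Bh (c s) u))
          (if s ∈ Set.Icc a b then (Set.univ : Set h) else ∅) := by
      intro s
      by_cases hsmem : s ∈ Set.Icc a b
      · simp only [hsmem, if_true]
        apply LipschitzWith.lipschitzOnWith
        apply LipschitzWith.of_dist_le_mul
        intro u v
        have heq : -(Bh (c s) u) - -(Bh (c s) v) = Bh (c s) (v - u) := by
          simp [map_sub]; abel
        rw [dist_eq_norm, dist_eq_norm, heq]
        calc ‖Bh (c s) (v - u)‖ ≤ ‖Bh‖ * ‖c s‖ * ‖v - u‖ := Bh.le_opNorm₂ _ _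
          _ ≤ ‖Bh‖ * (max C 0) * ‖v - u‖ := by
              gcongr
              exact le_max_of_le_left (hC s hsmem)
          _ = (K : ℝ) * ‖v - u‖ := by
              rw [hK]
              push_cast
              rw [Real.coe_toNNReal _ (le_max_right C 0)]
          _ = (K : ℝ) * ‖u - v‖ := by rw [norm_sub_rev]
      · simp [hsmem]
    -- continuity of f and of 0 on [a,b]
    have hfc : ContinuousOn f (Set.Icc a b) := fun s hs =>
      ((hf' s (hsub hs)).continuousWithinAt).mono hsub
    -- split on position of u relative to 0? no: use both one-sided uniqueness
    -- here we only use that a or b equals the initial point; we do both directions.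
    have hderiv_right : ∀ s ∈ Set.Ico a b,
        HasDerivWithinAt f (-(Bh (c s) (f s))) (Set.Ici s) s := by
      intro s hs
      have hIm : I ∈ nhdsWithin s (Set.Ici s) :=
        Filter.mem_of_superset
          ((mem_nhdsWithin.2 ⟨Set.Iio b, isOpen_Iio, hs.2,
            fun v hv => ⟨hv.2, le_of_lt hv.1⟩⟩ :
            Set.Icc s b ∈ nhdsWithin s (Set.Ici s)))
          (hIcc s b (hsub ⟨hs.1, le_of_lt hs.2⟩) hb)
      exact (hf' s (hsub ⟨hs.1, le_of_lt hs.2⟩)).mono_of_mem_nhdsWithin hIm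
    have hderiv_left : ∀ s ∈ Set.Ioc a b,
        HasDerivWithinAt f (-(Bh (c s) (f s))) (Set.Iic s) s := by
      intro s hs
      have hIm : I ∈ nhdsWithin s (Set.Iic s) :=
        Filter.mem_of_superset
          ((mem_nhdsWithin.2 ⟨Set.Ioi a, isOpen_Ioi, hs.1,
            fun v hv => ⟨le_of_lt hv.1, hv.2⟩⟩ :
            Set.Icc a s ∈ nhdsWithin s (Set.Iic s)))
          (hIcc a s ha (hsub ⟨le_of_lt hs.1, hs.2⟩))
      exact (hf' s (hsub ⟨le_of_lt hs.1, hs.2⟩)).mono_of_mem_nhdsWithin hIm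
    have hmem : ∀ s ∈ Set.Icc a b,
        f s ∈ (if s ∈ Set.Icc a b then (Set.univ : Set h) else ∅) := by
      intro s hs; simp [hs]
    have hmem0 : ∀ s ∈ Set.Icc a b,
        (0 : h) ∈ (if s ∈ Set.Icc a b then (Set.univ : Set h) else ∅) := by
      intro s hs; simp [hs]
    constructor
    · intro hfa
      have := ODE_solution_unique_of_mem_Icc_right (v := fun s u => -(Bh (c s) u))
        (K := K) (s := fun s => if s ∈ Set.Icc a b then (Set.univ : Set h) else ∅)
        (fun s _ => hlip s) hfc
        (fun s hs => by simpa using hderiv_right s hs)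
        (fun s hs => hmem s ⟨hs.1, le_of_lt hs.2⟩)
        (continuousOn_const (c := (0 : h)))
        (fun s hs => by
          simpa using (hasDerivWithinAt_const s (Set.Ici s) (0 : h)))
        (fun s hs => hmem0 s ⟨hs.1, le_of_lt hs.2⟩)
        hfa
      exact this ⟨hab, le_refl b⟩
    · intro hfb
      have := ODE_solution_unique_of_mem_Icc_left (v := fun s u => -(Bh (c s) u))
        (K := K) (s := fun s => if s ∈ Set.Icc a b then (Set.univ : Set h) else ∅)
        (fun s _ => hlip s) hfc
        (fun s hs => by simpa using hderiv_left s hs)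
        (fun s hs => hmem s ⟨le_of_lt hs.1, hs.2⟩)
        (continuousOn_const (c := (0 : h)))
        (fun s hs => by
          simpa using (hasDerivWithinAt_const s (Set.Iic s) (0 : h)))
        (fun s hs => hmem0 s ⟨le_of_lt hs.1, hs.2⟩)
        hfb
      exact this ⟨le_refl a, hab⟩
  -- now conclude using the sign of t
  rcases le_total 0 t with h0t | ht0
  · exact (key 0 t h0 ht h0t).1 hf0
  · exact (key t 0 ht h0 ht0).2 hf0
end

section
/- Let g and h be finite-dimensional real Lie algebras, let I ⊆ ℝ be an open interval containing 0 and 1, let c : I → h be a smooth curve, and let ψ : I → Hom_ℝ(g,h) be a differentiable curve such that ψ_0 is a morphism of Lie algebras and (∂_t ψ)_t(x) = −[c(t), ψ_t(x)]_h for all t ∈ I and x ∈ g. Then there exists a differentiable curve u : I → End_ℝ(h) such that: u_0 = id_h; for every t ∈ I, (∂_t u)_t(w) = −[c(t), u_t(w)]_h for all w ∈ h; for every t ∈ I the map u_t is a Lie algebra automorphism of h, i.e. a linear bijection with u_t([v,w]_h) = [u_t(v), u_t(w)]_h for all v, w ∈ h; and ψ_t = u_t ∘ ψ_0 for all t ∈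 I. In other words, ψ is a deformation of ψ_0 by a curve of Lie algebra automorphisms of h starting at the identity (in the paper these automorphisms are realized as u_t = Ad_{h(t)} for a smooth curve h(t) in the simply connected Lie group integrating h, so that ψ is a trivial deformation of ψ_0). -/
open Set Filter Topology MeasureTheory intervalIntegral

section Helpers

variable {E : Type*} [NormedAddCommGroup E] [NormedSpace ℝ E] [CompleteSpace E]
variable {I : Set ℝ}

/-- choose a compact interval inside the open ord-connected set `I` whose interior
contains two given points. -/
lemma exists_icc_subset (hIopen : IsOpen I) (hIconn : I.OrdConnected)
    {x y : ℝ} (hx : x ∈ I) (hy : y ∈ I) :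
    ∃ a b : ℝ, a < min x y ∧ max x y < b ∧ Icc a b ⊆ I := by
  obtain ⟨ε₁, hε₁, hb₁⟩ := Metric.isOpen_iff.1 hIopen (min x y) (by
    rcases min_choice x y with hm | hm <;> rw [hm] <;> assumption)
  obtain ⟨ε₂, hε₂, hb₂⟩ := Metric.isOpen_iff.1 hIopen (max x y) (by
    rcases max_choice x y with hm | hm <;> rw [hm] <;> assumption)
  refine ⟨min x y - ε₁/2, max x y + ε₂/2, by linarith, by linarith, ?_⟩
  have ha : min x y - ε₁/2 ∈ I := hb₁ (by
    simp only [Metric.mem_ball, Real.dist_eq]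
    rw [abs_of_nonpos (by linarith)]; linarith)
  have hb : max x y + ε₂/2 ∈ I := hb₂ (by
    simp only [Metric.mem_ball, Real.dist_eq]
    rw [abs_of_nonneg (by linarith)]; linarith)
  exact hIconn.out ha hb

/-- FTC on an open ord-connected set. -/
lemma ftc_on_open (hIopen : IsOpen I) (hIconn : I.OrdConnected) (h0 : (0:ℝ) ∈ I)
    {g : ℝ → E} (hg : ContinuousOn g I) {t : ℝ} (ht : t ∈ I) :
    HasDerivAt (fun u => ∫ s in (0:ℝ)..u, g s) (g t) t := by
  refine integral_hasDerivAt_right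
    ((hg.mono (hIconn.uIcc_subset h0 ht)).intervalIntegrable) ?_
    (hg.continuousAt (hIopen.mem_nhds ht))
  exact hg.stronglyMeasurableAtFilter hIopen _ ht

/-- elementary integral estimate `‖∫₀ᵗ f‖ ≤ C|t|^{n+1}/(n+1)` from `‖f s‖ ≤ C |s|^n`. -/
lemma norm_integral_le_pow {f : ℝ → E} {t C : ℝ} (hC : 0 ≤ C) (n : ℕ)
    (hf : IntervalIntegrable f volume 0 t)
    (hbound : ∀ s ∈ uIcc (0:ℝ) t, ‖f s‖ ≤ C * |s| ^ n) :
    ‖∫ s in (0:ℝ)..t, f s‖ ≤ C * |t| ^ (n+1) / (n+1) := by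
  rcases le_total 0 t with h | h
  · rw [abs_of_nonneg h]
    calc ‖∫ s in (0:ℝ)..t, f s‖ ≤ ∫ s in (0:ℝ)..t, ‖f s‖ :=
          intervalIntegral.norm_integral_le_integral_norm h
      _ ≤ ∫ s in (0:ℝ)..t, C * s ^ n := by
          apply intervalIntegral.integral_mono_on h hf.norm
            (Continuous.intervalIntegrable (by continuity) 0 t)
          intro s hs
          have := hbound s (by rw [uIcc_of_le h]; exact hs)
          rwa [abs_of_nonneg hs.1] at this
      _ = C * t ^ (n+1) / (n+1) := by
          rw [intervalIntegral.integral_const_mul, integral_pow]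
          push_cast; ring
  · rw [abs_of_nonpos h, intervalIntegral.integral_symm, norm_neg]
    calc ‖∫ s in t..(0:ℝ), f s‖ ≤ ∫ s in t..(0:ℝ), ‖f s‖ :=
          intervalIntegral.norm_integral_le_integral_norm h
      _ ≤ ∫ s in t..(0:ℝ), C * (-s) ^ n := by
          apply intervalIntegral.integral_mono_on h hf.symm.norm
            (Continuous.intervalIntegrable (by continuity) t 0)
          intro s hs
          have := hbound s (by rw [uIcc_of_ge h]; exact hs)
          rwa [abs_of_nonpos hs.2] at this
      _ = C * (-t) ^ (n+1) / (n+1) := by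
          rw [intervalIntegral.integral_const_mul]
          have : ∫ s in t..(0:ℝ), (-s) ^ n = ∫ s in (0:ℝ)..(-t), s ^ n := by
            simpa using intervalIntegral.integral_comp_neg (a := t) (b := 0) (fun s => s ^ n)
          rw [this, integral_pow]
          push_cast; ring


variable (A : ℝ → E →L[ℝ] E) (y₀ : E)

/-- Picard iterates for the linear ODE `y' = A t y`, `y 0 = y₀`. -/
noncomputable def picard : ℕ → ℝ → E
  | 0 => fun _ => y₀
  | (n+1) => fun t => y₀ + ∫ s in (0:ℝ)..t, A s (picard n s)

variable {A y₀}

lemma picard_zero_eq (n : ℕ) : picard A y₀ n 0 = y₀ := by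
  cases n with
  | zero => rfl
  | succ n => show y₀ + _ = y₀; rw [intervalIntegral.integral_same, add_zero]

variable (hIopen : IsOpen I) (hIconn : I.OrdConnected) (h0 : (0:ℝ) ∈ I)
  (hA : ContinuousOn A I)

include hIopen hIconn h0 hA in
lemma picard_cont : ∀ n, ContinuousOn (picard A y₀ n) I := by
  intro n
  induction n with
  | zero => exact continuousOn_const
  | succ n ih =>
    intro t ht
    exact (((ftc_on_open hIopen hIconn h0 (hA.clm_apply ih) ht).const_add
      y₀).continuousAt).continuousWithinAt

include hIopen hIconn h0 hA in
lemma picard_deriv (n : ℕ) {t : ℝ} (ht : t ∈ I) :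
    HasDerivAt (picard A y₀ (n+1)) (A t (picard A y₀ n t)) t :=
  (ftc_on_open hIopen hIconn h0
    (hA.clm_apply (picard_cont hIopen hIconn h0 hA n)) ht).const_add y₀

include hIopen hIconn h0 hA in
lemma picard_bound {a b K : ℝ} (hab : Icc a b ⊆ I) (ha : a ≤ 0) (hb : 0 ≤ b)
    (hK : 0 ≤ K) (hbd : ∀ s ∈ Icc a b, ‖A s‖ ≤ K) :
    ∀ n, ∀ t ∈ Icc a b, ‖picard A y₀ (n+1) t - picard A y₀ n t‖ ≤
      ‖y₀‖ * K ^ (n+1) * |t| ^ (n+1) / (n+1).factorial := by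
  have hsub : ∀ t ∈ Icc a b, uIcc (0:ℝ) t ⊆ Icc a b := fun t ht =>
    uIcc_subset_Icc ⟨ha, hb⟩ ht
  have hint : ∀ m, ∀ t ∈ Icc a b,
      IntervalIntegrable (fun s => A s (picard A y₀ m s)) volume 0 t := fun m t ht =>
    ((hA.clm_apply (picard_cont hIopen hIconn h0 hA m)).mono
      ((hsub t ht).trans hab)).intervalIntegrable
  intro n
  induction n with
  | zero =>
    intro t ht
    have heq : picard A y₀ 1 t - picard A y₀ 0 t = ∫ s in (0:ℝ)..t, A s y₀ := by
      show (y₀ + _) - y₀ = _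
      rw [add_sub_cancel_left]; rfl
    rw [heq]
    have := norm_integral_le_pow (f := fun s => A s y₀) (t := t) (C := K * ‖y₀‖)
      (by positivity) 0 (hint 0 t ht) (fun s hs => by
        rw [pow_zero, mul_one]
        exact le_trans ((A s).le_opNorm y₀)
          (mul_le_mul_of_nonneg_right (hbd s (hsub t ht hs)) (norm_nonneg _)))
    refine le_trans this (le_of_eq ?_)
    simp only [Nat.cast_zero, Nat.factorial, Nat.cast_one, zero_add, pow_one, Nat.cast_ofNat,
      Nat.mul_one]
    norm_num
    exact Or.inl (mul_comm _ _)
  | succ n ih =>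
    intro t ht
    have hintd : IntervalIntegrable
        (fun s => A s (picard A y₀ (n+1) s - picard A y₀ n s)) volume 0 t :=
      ((hA.clm_apply ((picard_cont hIopen hIconn h0 hA (n+1)).sub
        (picard_cont hIopen hIconn h0 hA n))).mono
        ((hsub t ht).trans hab)).intervalIntegrable
    have heq : picard A y₀ (n+2) t - picard A y₀ (n+1) t
        = ∫ s in (0:ℝ)..t, A s (picard A y₀ (n+1) s - picard A y₀ n s) := by
      show (y₀ + _) - (y₀ + _) = _
      rw [add_sub_add_left_eq_sub,
        ← intervalIntegral.integral_sub (hint (n+1) t ht) (hint n t ht)]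
      simp only [map_sub]
    rw [heq]
    set C : ℝ := K * (‖y₀‖ * K ^ (n+1) / (n+1).factorial) with hCdef
    have hC : 0 ≤ C := by positivity
    have hb2 : ∀ s ∈ uIcc (0:ℝ) t, ‖A s (picard A y₀ (n+1) s - picard A y₀ n s)‖
        ≤ C * |s| ^ (n+1) := by
      intro s hs
      have h1 := (A s).le_opNorm (picard A y₀ (n+1) s - picard A y₀ n s)
      have h2 := ih s (hsub t ht hs)
      have h3 := hbd s (hsub t ht hs)
      calc ‖A s (picard A y₀ (n+1) s - picard A y₀ n s)‖
          ≤ K * (‖y₀‖ * K ^ (n+1) * |s| ^ (n+1) / (n+1).factorial) := by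
            refine le_trans h1 (mul_le_mul h3 h2 (norm_nonneg _) hK)
        _ = C * |s| ^ (n+1) := by rw [hCdef]; ring
    have := norm_integral_le_pow hC (n+1) hintd hb2
    refine le_trans this (le_of_eq ?_)
    rw [hCdef, Nat.factorial_succ (n+1)]
    have h1 : ((n+1).factorial : ℝ) ≠ 0 := by positivity
    push_cast
    field_simp
    ring

lemma summable_aux (cst x : ℝ) :
    Summable (fun n : ℕ => cst * (x ^ (n+1) / (n+1).factorial)) := by
  have h := (Real.summable_pow_div_factorial x).mul_left cst
  exact ((summable_nat_add_iff 1).2 h).congr (fun n => rfl)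

include hIopen hIconn h0 hA in
lemma picard_unif {a b K : ℝ} (hab : Icc a b ⊆ I) (ha : a ≤ 0) (hb : 0 ≤ b)
    (hK : 0 ≤ K) (hbd : ∀ s ∈ Icc a b, ‖A s‖ ≤ K) :
    ∃ R : ℕ → ℝ, Tendsto R atTop (𝓝 0) ∧ ∀ n, ∀ (L : E), ∀ t ∈ Icc a b,
      Tendsto (fun m => picard A y₀ m t) atTop (𝓝 L) →
      ‖L - picard A y₀ n t‖ ≤ R n := by
  set M : ℝ := max |a| |b| with hMdef
  have hM : ∀ t ∈ Icc a b, |t| ≤ M := by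
    intro t ht
    rw [abs_le]
    constructor
    · calc -M ≤ -|a| := neg_le_neg (le_max_left _ _)
        _ ≤ a := neg_abs_le a
        _ ≤ t := ht.1
    · calc t ≤ b := ht.2
        _ ≤ |b| := le_abs_self b
        _ ≤ M := le_max_right _ _
  set d : ℕ → ℝ := fun m => ‖y₀‖ * ((K * M) ^ (m+1) / (m+1).factorial) with hddef
  have hdsum : Summable d := summable_aux _ _
  refine ⟨fun n => ∑' m, d (n + m), ?_, ?_⟩
  · have h := tendsto_sum_nat_add d
    refine h.congr (fun n => tsum_congr (fun m => by rw [add_comm]))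
  · intro n L t ht htend
    have hdist : ∀ m, dist (picard A y₀ m t) (picard A y₀ (m+1) t) ≤ d m := by
      intro m
      rw [dist_eq_norm']
      refine (picard_bound hIopen hIconn h0 hA hab ha hb hK hbd m t ht).trans ?_
      rw [hddef]
      simp only
      rw [mul_pow, ← mul_div_assoc, ← mul_assoc]
      gcongr
      exact hM t ht
    have := dist_le_tsum_of_dist_le_of_tendsto d hdist hdsum htend n
    rwa [dist_eq_norm'] at this

include hIopen hIconn h0 hA in
theorem exists_linear_ode_solution :
    ∃ f : ℝ → E, f 0 = y₀ ∧ ContinuousOn f I ∧ ∀ t ∈ I, HasDerivAt f (A t (f t)) t := by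
  classical
  -- for every point of `I`, a compact interval with a bound on `A`
  have setup : ∀ t ∈ I, ∃ a b K : ℝ, a < min 0 t ∧ max 0 t < b ∧ Icc a b ⊆ I ∧
      0 ≤ K ∧ ∀ s ∈ Icc a b, ‖A s‖ ≤ K := by
    intro t ht
    obtain ⟨a, b, hamin, hbmax, hab⟩ := exists_icc_subset hIopen hIconn h0 ht
    obtain ⟨C, hC⟩ := isCompact_Icc.exists_bound_of_continuousOn (hA.mono hab)
    exact ⟨a, b, max C 0, hamin, hbmax, hab, le_max_right C 0,
      fun s hs => (hC s hs).trans (le_max_left _ _)⟩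
  -- the Picard iterates converge pointwise on `I`
  have hCauchy : ∀ t ∈ I, ∃ L, Tendsto (fun n => picard A y₀ n t) atTop (𝓝 L) := by
    intro t ht
    obtain ⟨a, b, K, ha', hb', hab, hK, hbd⟩ := setup t ht
    have ha : a ≤ 0 := le_of_lt (lt_of_lt_of_le ha' (min_le_left 0 t))
    have hb : (0:ℝ) ≤ b := le_of_lt (lt_of_le_of_lt (le_max_left 0 t) hb')
    have htab : t ∈ Icc a b :=
      ⟨le_of_lt (lt_of_lt_of_le ha' (min_le_right 0 t)),
       le_of_lt (lt_of_le_of_lt (le_max_right 0 t) hb')⟩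
    have hc : CauchySeq (fun n => picard A y₀ n t) := by
      apply cauchySeq_of_dist_le_of_summable
        (fun n => ‖y₀‖ * ((K * |t|) ^ (n+1) / (n+1).factorial)) ?_ (summable_aux _ _)
      intro n
      rw [dist_eq_norm']
      refine (picard_bound hIopen hIconn h0 hA hab ha hb hK hbd n t htab).trans
        (le_of_eq ?_)
      show _ = ‖y₀‖ * ((K * |t|) ^ (n+1) / ((n+1).factorial : ℝ))
      rw [mul_pow]; ring
    exact cauchySeq_tendsto_of_complete hc
  set f : ℝ → E := fun t =>
    if h : ∃ L, Tendsto (fun n => picard A y₀ n t) atTop (𝓝 L) then h.choose else y₀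
    with hfdef
  have htends : ∀ t ∈ I, Tendsto (fun n => picard A y₀ n t) atTop (𝓝 (f t)) := by
    intro t ht
    have h := hCauchy t ht
    simp only [hfdef, dif_pos h]
    exact h.choose_spec
  have hf0 : f 0 = y₀ :=
    tendsto_nhds_unique (htends 0 h0)
      (tendsto_const_nhds.congr (fun n => (picard_zero_eq n).symm))
  -- continuity of the limit
  have hcontf : ContinuousOn f I := by
    intro t ht
    obtain ⟨a, b, K, ha', hb', hab, hK, hbd⟩ := setup t ht
    have ha : a ≤ 0 := le_of_lt (lt_of_lt_of_le ha' (min_le_left 0 t))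
    have hb : (0:ℝ) ≤ b := le_of_lt (lt_of_le_of_lt (le_max_left 0 t) hb')
    obtain ⟨R, hR0, hR⟩ := picard_unif hIopen hIconn h0 hA hab ha hb hK hbd
    have hU : TendstoUniformlyOn (fun n t => picard A y₀ n t) f atTop (Icc a b) := by
      rw [Metric.tendstoUniformlyOn_iff]
      intro ε hε
      filter_upwards [hR0.eventually (gt_mem_nhds hε)] with n hn x hx
      have := hR n (f x) x hx (htends x (hab hx))
      rw [dist_eq_norm]
      exact lt_of_le_of_lt this hn
    have hcont : ContinuousOn f (Icc a b) :=
      hU.continuousOn (Eventually.of_forall fun n =>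
        (picard_cont hIopen hIconn h0 hA n).mono hab).frequently
    have htIoo : t ∈ Ioo a b :=
      ⟨lt_of_lt_of_le ha' (min_le_right 0 t), lt_of_le_of_lt (le_max_right 0 t) hb'⟩
    exact (hcont.continuousAt (Icc_mem_nhds htIoo.1 htIoo.2)).continuousWithinAt
  -- the limit satisfies the integral equation
  have hfeq : ∀ t ∈ I, f t = y₀ + ∫ s in (0:ℝ)..t, A s (f s) := by
    intro t ht
    obtain ⟨a, b, K, ha', hb', hab, hK, hbd⟩ := setup t ht
    have ha : a ≤ 0 := le_of_lt (lt_of_lt_of_le ha' (min_le_left 0 t))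
    have hb : (0:ℝ) ≤ b := le_of_lt (lt_of_le_of_lt (le_max_left 0 t) hb')
    have htab : t ∈ Icc a b :=
      ⟨le_of_lt (lt_of_lt_of_le ha' (min_le_right 0 t)),
       le_of_lt (lt_of_le_of_lt (le_max_right 0 t) hb')⟩
    have hsub : uIcc (0:ℝ) t ⊆ Icc a b := uIcc_subset_Icc ⟨ha, hb⟩ htab
    obtain ⟨R, hR0, hR⟩ := picard_unif hIopen hIconn h0 hA hab ha hb hK hbd
    have hintf : IntervalIntegrable (fun s => A s (f s)) volume 0 t :=
      ((hA.clm_apply hcontf).mono (hsub.trans hab)).intervalIntegrable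
    have hintp : ∀ m, IntervalIntegrable (fun s => A s (picard A y₀ m s)) volume 0 t :=
      fun m => ((hA.clm_apply (picard_cont hIopen hIconn h0 hA m)).mono
        (hsub.trans hab)).intervalIntegrable
    have h1 : Tendsto (fun n => picard A y₀ (n+1) t) atTop (𝓝 (f t)) :=
      (htends t ht).comp (tendsto_add_atTop_nat 1)
    have hbound : ∀ n, ‖(∫ s in (0:ℝ)..t, A s (picard A y₀ n s)) -
        ∫ s in (0:ℝ)..t, A s (f s)‖ ≤ K * R n * |t| := by
      intro n
      rw [← intervalIntegral.integral_sub (hintp n) hintf]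
      have : ∀ s ∈ uIoc (0:ℝ) t,
          ‖A s (picard A y₀ n s) - A s (f s)‖ ≤ K * R n := by
        intro s hs
        have hsmem : s ∈ Icc a b := hsub (uIoc_subset_uIcc hs)
        rw [← map_sub]
        refine ((A s).le_opNorm _).trans ?_
        have h2 : ‖picard A y₀ n s - f s‖ ≤ R n := by
          rw [norm_sub_rev]
          exact hR n (f s) s hsmem (htends s (hab hsmem))
        exact mul_le_mul (hbd s hsmem) h2 (norm_nonneg _) hK
      have := intervalIntegral.norm_integral_le_of_norm_le_const this
      simpa using this
    have h2 : Tendsto (fun n => ∫ s in (0:ℝ)..t, A s (picard A y₀ n s)) atTop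
        (𝓝 (∫ s in (0:ℝ)..t, A s (f s))) := by
      rw [tendsto_iff_norm_sub_tendsto_zero]
      refine squeeze_zero_norm (fun n => by simpa using hbound n) ?_
      have : Tendsto (fun n => K * R n * |t|) atTop (𝓝 (K * 0 * |t|)) :=
        (hR0.const_mul K).mul_const |t|
      simpa using this
    have h3 : Tendsto (fun n => picard A y₀ (n+1) t) atTop
        (𝓝 (y₀ + ∫ s in (0:ℝ)..t, A s (f s))) := by
      have := h2.const_add y₀
      exact this.congr (fun n => rfl)
    exact tendsto_nhds_unique h1 h3
  refine ⟨f, hf0, hcontf, ?_⟩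
  intro t ht
  have hg : ContinuousOn (fun s => A s (f s)) I := hA.clm_apply hcontf
  have hd : HasDerivAt (fun u => y₀ + ∫ s in (0:ℝ)..u, A s (f s)) (A t (f t)) t :=
    (ftc_on_open hIopen hIconn h0 hg ht).const_add y₀
  refine hd.congr_of_eventuallyEq ?_
  filter_upwards [hIopen.mem_nhds ht] with s hs
  exact hfeq s hs

include hIopen hIconn h0 hA in
lemma linear_ode_unique {f₁ f₂ : ℝ → E}
    (hf₁ : ∀ t ∈ I, HasDerivAt f₁ (A t (f₁ t)) t)
    (hf₂ : ∀ t ∈ I, HasDerivAt f₂ (A t (f₂ t)) t)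
    (heq0 : f₁ 0 = f₂ 0) : ∀ t ∈ I, f₁ t = f₂ t := by
  intro t ht
  obtain ⟨a, b, ha', hb', hab⟩ := exists_icc_subset hIopen hIconn h0 ht
  obtain ⟨C, hC⟩ := isCompact_Icc.exists_bound_of_continuousOn (hA.mono hab)
  set K : NNReal := ⟨max C 0, le_max_right C 0⟩ with hKdef
  set v : ℝ → E → E := fun s x => if s ∈ Icc a b then A s x else 0 with hvdef
  have hv : ∀ s, LipschitzWith K (v s) := by
    intro s
    by_cases hs : s ∈ Icc a b
    · simp only [hvdef, if_pos hs]
      refine (A s).lipschitz.weaken ?_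
      rw [← NNReal.coe_le_coe]
      exact (hC s hs).trans (le_max_left _ _)
    · simp only [hvdef, if_neg hs]
      exact (LipschitzWith.const 0).weaken zero_le
  have h0' : (0:ℝ) ∈ Ioo a b :=
    ⟨lt_of_lt_of_le ha' (min_le_left 0 t), lt_of_le_of_lt (le_max_left 0 t) hb'⟩
  have ht' : t ∈ Ioo a b :=
    ⟨lt_of_lt_of_le ha' (min_le_right 0 t), lt_of_le_of_lt (le_max_right 0 t) hb'⟩
  have key : ∀ (f : ℝ → E), (∀ s ∈ I, HasDerivAt f (A s (f s)) s) →
      ∀ s ∈ Ioo a b, HasDerivAt f (v s (f s)) s ∧ f s ∈ (univ : Set E) := by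
    intro f hf s hs
    refine ⟨?_, trivial⟩
    have : v s (f s) = A s (f s) := by
      simp only [hvdef, if_pos (Ioo_subset_Icc_self hs)]
    rw [this]
    exact hf s (hab (Ioo_subset_Icc_self hs))
  exact ODE_solution_unique_of_mem_Ioo (s := fun _ => (univ : Set E))
    (fun s _ => (hv s).lipschitzOnWith) h0' (key f₁ hf₁) (key f₂ hf₂) heq0 ht'

end Helpers
/-- **LA-homotopies of Lie algebra morphisms are trivial deformations.**
If `(c, ψ)` is the data of an LA-homotopy between Lie algebra morphisms `g → h`
(i.e. `c : I → h` is smooth, `ψ : I → Hom_ℝ(g,h)` is differentiable, `ψ_0` is a Lie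
algebra morphism and `(∂ₜψ)_t(x) = −[c(t), ψ_t(x)]_h` on the open interval `I` with
`0, 1 ∈ I`), then there is a differentiable curve `u : I → End_ℝ(h)` with `u_0 = id`,
`(∂ₜu)_t(w) = −[c(t), u_t(w)]_h`, each `u_t` a Lie algebra automorphism of `h`, and
`ψ_t = u_t ∘ ψ_0` for all `t ∈ I`: `ψ` is a trivial deformation of `ψ_0`. -/
theorem la_homotopy_is_trivial_deformation
    {g : Type*} [NormedAddCommGroup g] [NormedSpace ℝ g] [FiniteDimensional ℝ g]
    {h : Type*} [NormedAddCommGroup h] [NormedSpace ℝ h] [FiniteDimensional ℝ h]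
    (Bg : g →L[ℝ] g →L[ℝ] g) (Bh : h →L[ℝ] h →L[ℝ] h)
    (hBg_alt : ∀ x : g, Bg x x = 0)
    (hBg_jac : ∀ x y z : g, Bg x (Bg y z) = Bg (Bg x y) z + Bg y (Bg x z))
    (hBh_alt : ∀ u : h, Bh u u = 0)
    (hBh_jac : ∀ u v w : h, Bh u (Bh v w) = Bh (Bh u v) w + Bh v (Bh u w))
    (I : Set ℝ) (hIopen : IsOpen I) (hIconn : I.OrdConnected)
    (h0 : (0 : ℝ) ∈ I) (h1 : (1 : ℝ) ∈ I)
    (c : ℝ → h) (hc : ContDiffOn ℝ (⊤ : ℕ∞) c I)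
    (ψ : ℝ → (g →L[ℝ] h))
    (hψ0 : ∀ x y : g, ψ 0 (Bg x y) = Bh (ψ 0 x) (ψ 0 y))
    (hode : ∀ t ∈ I, ∀ x : g,
      HasDerivAt (fun s => ψ s x) (- Bh (c t) (ψ t x)) t) :
    ∃ u : ℝ → (h →L[ℝ] h),
      u 0 = ContinuousLinearMap.id ℝ h ∧
      (∀ t ∈ I, ∀ w : h, HasDerivAt (fun s => u s w) (- Bh (c t) (u t w)) t) ∧
      (∀ t ∈ I, Function.Bijective (u t)) ∧
      (∀ t ∈ I, ∀ v w : h, u t (Bh v w) = Bh (u t v) (u t w)) ∧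
      (∀ t ∈ I, ψ t = (u t).comp (ψ 0)) := by
  have hccont : ContinuousOn c I := hc.continuousOn
  -- the curve `t ↦ ad(c t) = Bh (c t)` of endomorphisms of `h`
  have hadc : ContinuousOn (fun t => Bh (c t)) I := Bh.continuous.comp_continuousOn hccont
  -- the linear ODE `u' = -ad(c t) ∘ u` on `End(h)`
  set A₁ : ℝ → (h →L[ℝ] h) →L[ℝ] (h →L[ℝ] h) :=
    fun t => ContinuousLinearMap.compL ℝ h h h (-(Bh (c t))) with hA₁def
  have hA₁ : ContinuousOn A₁ I :=
    (ContinuousLinearMap.compL ℝ h h h).continuous.comp_continuousOn hadc.neg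
  obtain ⟨u, hu0, hucont, hud⟩ :=
    exists_linear_ode_solution hIopen hIconn h0 hA₁ (y₀ := ContinuousLinearMap.id ℝ h)
  -- the linear ODE `v' = v ∘ ad(c t)` on `End(h)`
  set A₂ : ℝ → (h →L[ℝ] h) →L[ℝ] (h →L[ℝ] h) :=
    fun t => (ContinuousLinearMap.compL ℝ h h h).flip (Bh (c t)) with hA₂def
  have hA₂ : ContinuousOn A₂ I :=
    (ContinuousLinearMap.compL ℝ h h h).flip.continuous.comp_continuousOn hadc
  obtain ⟨v, hv0, hvcont, hvd⟩ :=
    exists_linear_ode_solution hIopen hIconn h0 hA₂ (y₀ := ContinuousLinearMap.id ℝ h)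
  -- pointwise form of the derivative of `u`
  have hupt : ∀ t ∈ I, ∀ w : h, HasDerivAt (fun s => u s w) (- Bh (c t) (u t w)) t := by
    intro t ht w
    have := (hud t ht).clm_apply (hasDerivAt_const t w)
    simpa [hA₁def] using this
  -- the curve `A` of the `h`-valued ODE
  set Ah : ℝ → h →L[ℝ] h := fun t => -(Bh (c t)) with hAhdef
  have hAh : ContinuousOn Ah I := hadc.neg
  -- `v t ∘ u t = id` on `I`
  have hvu : ∀ t ∈ I, (v t).comp (u t) = ContinuousLinearMap.id ℝ h := by
    have := linear_ode_unique hIopen hIconn h0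
      (A := fun _ : ℝ => (0 : ((h →L[ℝ] h) →L[ℝ] (h →L[ℝ] h)))) continuousOn_const
      (f₁ := fun t => (v t).comp (u t)) (f₂ := fun _ => ContinuousLinearMap.id ℝ h)
      ?_ ?_ ?_
    · exact this
    · intro t ht
      have hder := (hvd t ht).clm_comp (hud t ht)
      have hzero : (A₂ t (v t)).comp (u t) + (v t).comp (A₁ t (u t)) = 0 := by
        ext w
        simp [hA₁def, hA₂def]
      rw [hzero] at hder
      simpa using hder
    · intro t ht
      simpa using hasDerivAt_const t (ContinuousLinearMap.id ℝ h)
    · show (v 0).comp (u 0) = _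
      rw [hv0, hu0]; simp
  -- left inverse pointwise
  have hleft : ∀ t ∈ I, ∀ w : h, v t (u t w) = w := by
    intro t ht w
    have := congrArg (fun (M : h →L[ℝ] h) => M w) (hvu t ht)
    simpa using this
  refine ⟨u, hu0, hupt, ?_, ?_, ?_⟩
  · -- bijectivity
    intro t ht
    have hinj : Function.Injective (u t) := by
      intro x y hxy
      have := congrArg (v t) hxy
      rwa [hleft t ht x, hleft t ht y] at this
    have hsurj : Function.Surjective (u t) := by
      have : Function.Injective ((u t) : h →ₗ[ℝ] h) := hinj
      exact (LinearMap.injective_iff_surjective.mp this : Function.Surjective ((u t) : h →ₗ[ℝ] h))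
    exact ⟨hinj, hsurj⟩
  · -- automorphism property
    intro t ht p q
    have := linear_ode_unique hIopen hIconn h0 (A := Ah) hAh
      (f₁ := fun s => u s (Bh p q)) (f₂ := fun s => Bh (u s p) (u s q)) ?_ ?_ ?_
    · exact this t ht
    · intro s hs
      have := hupt s hs (Bh p q)
      simpa [hAhdef] using this
    · intro s hs
      have h1 : HasDerivAt (fun r => Bh (u r p)) (Bh (- Bh (c s) (u s p))) s :=
        Bh.hasFDerivAt.comp_hasDerivAt s (hupt s hs p)
      have h2 := h1.clm_apply (hupt s hs q)
      have heq : Bh (- Bh (c s) (u s p)) (u s q) + Bh (u s p) (- Bh (c s) (u s q))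
          = Ah s (Bh (u s p) (u s q)) := by
        have j := hBh_jac (c s) (u s p) (u s q)
        simp only [hAhdef, map_neg, ContinuousLinearMap.neg_apply, j]
        abel
      rwa [heq] at h2
    · show u 0 (Bh p q) = Bh (u 0 p) (u 0 q)
      rw [hu0]; simp
  · -- `ψ t = u t ∘ ψ 0`
    intro t ht
    ext x
    have := linear_ode_unique hIopen hIconn h0 (A := Ah) hAh
      (f₁ := fun s => ψ s x) (f₂ := fun s => u s (ψ 0 x)) ?_ ?_ ?_
    · simpa using this t ht
    · intro s hs
      simpa [hAhdef] using hode s hs x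
    · intro s hs
      simpa [hAhdef] using hupt s hs (ψ 0 x)
    · show ψ 0 x = u 0 (ψ 0 x)
      rw [hu0]; simp
end
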